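/- In a Clos topology with n0 ≥ n2 and npod ≥ 1 + n2(n0-1)/(n0(n0-n2)) (and n0 > n2), the minimum of the two link-traversal probabilities 1/(n0*n1*npod) (level-1) and (1/(n1*n2*npod)) * (n0(npod-1)/(n0*npod-1)) (level-2) is attained by the level-1 expression; i.e., 1/(n0*n1*npod) ≤ (1/(n1*n2*npod)) * (n0(npod-1)/(n0*npod-1)). -/
import Mathlib

/-- In a Clos topology with `n0 > n2` and
`npod ≥ 1 + n2(n0-1)/(n0(n0-n2))`, the minimum of the level-1 and level-2
traversal probabilities is attained by the level-1 expression: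
`1/(n0*n1*npod) ≤ (1/(n1*n2*npod)) * (n0(npod-1)/(n0*npod-1))`. -/
theorem level1_prob_is_min
    (n0 n1 n2 npod : ℕ)
    (h1 : 1 ≤ n1) (h2 : 1 ≤ n2) (h02 : n2 < n0) (hp : 2 ≤ npod)
    (hpod : (npod : ℝ) ≥ 1 + (n2 : ℝ) * ((n0 : ℝ) - 1) / ((n0 : ℝ) * ((n0 : ℝ) - n2))) :
    1 / ((n0 : ℝ) * n1 * npod)
      ≤ (1 / ((n1 : ℝ) * n2 * npod)) *
        (((n0 : ℝ) * ((npod : ℝ) - 1)) / ((n0 : ℝ) * npod - 1)) := by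
  have ha : (1:ℝ) ≤ n0 := by exact_mod_cast Nat.one_le_of_lt h02
  have hb : (1:ℝ) ≤ n1 := by exact_mod_cast h1
  have hc : (1:ℝ) ≤ n2 := by exact_mod_cast h2
  have hcc : (n2:ℝ) < n0 := by exact_mod_cast h02
  have hpp : (2:ℝ) ≤ npod := by exact_mod_cast hp
  have hac : (0:ℝ) < (n0:ℝ) * ((n0:ℝ) - n2) := by nlinarith
  have hkey : (npod:ℝ) * ((n0:ℝ) * ((n0:ℝ) - n2)) ≥
      (n0:ℝ) * ((n0:ℝ) - n2) + (n2:ℝ) * ((n0:ℝ) - 1) := by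
    have h := (div_le_iff₀ hac).mp (by linarith [hpod] :
      (n2:ℝ) * ((n0:ℝ) - 1) / ((n0:ℝ) * ((n0:ℝ) - n2)) ≤ (npod:ℝ) - 1)
    nlinarith [h]
  have hap : (0:ℝ) < (n0:ℝ) * npod - 1 := by nlinarith
  have h1p : (0:ℝ) < (n0:ℝ) * n1 * npod := by nlinarith
  have h2p : (0:ℝ) < (n1:ℝ) * n2 * npod := by nlinarith
  rw [div_mul_div_comm, one_mul, div_le_div_iff₀ h1p (by positivity)]
  nlinarith [hkey, mul_pos h1p h2p]
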